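/- Let κ be an uncountable cardinal and let X be a nonempty topological space. Then the power X^κ (with the product topology) is SHD if and only if X^κ is not sequentially compact. -/
import Mathlib


open Filter Topology Set

/-- `x : ℕ → X` has no convergent subsequence. -/
def NoConvSubseq {X : Type*} [TopologicalSpace X] (x : ℕ → X) : Prop :=
  ∀ φ : ℕ → ℕ, StrictMono φ → ∀ y : X, ¬ Filter.Tendsto (x ∘ φ) Filter.atTop (nhds y)

/-- Selectively highly divergent. -/
def SHD (X : Type*) [TopologicalSpace X] : Prop :=
  ∀ U : ℕ → Set X, (∀ n, IsOpen (U n)) → (∀ n, (U n).Nonempty) →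
    ∃ x : ℕ → X, (∀ n, x n ∈ U n) ∧ NoConvSubseq x

/-- Weakly selectively highly divergent. -/
def WSHD (X : Type*) [TopologicalSpace X] : Prop :=
  ∀ U : ℕ → Set X, (∀ n, IsOpen (U n)) → (∀ n, (U n).Nonempty) →
    ∃ A : Set ℕ, A.Infinite ∧ ∃ x : ℕ → X, (∀ n ∈ A, x n ∈ U n) ∧
      ∀ φ : ℕ → ℕ, StrictMono φ → (∀ n, φ n ∈ A) →
        ∀ y : X, ¬ Filter.Tendsto (x ∘ φ) Filter.atTop (nhds y)

/-- A sequence of nonempty open sets converges to a point. -/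
def OpenSeqTendsto {X : Type*} [TopologicalSpace X] (U : ℕ → Set X) (x : X) : Prop :=
  ∀ V : Set X, IsOpen V → x ∈ V → ∃ m : ℕ, ∀ n ≥ m, U n ⊆ V

/-- Openly highly divergent: no sequence of nonempty open sets converges to a point. -/
def OHD (X : Type*) [TopologicalSpace X] : Prop :=
  ¬ ∃ (U : ℕ → Set X) (x : X),
      (∀ n, IsOpen (U n)) ∧ (∀ n, (U n).Nonempty) ∧ OpenSeqTendsto U x

/-- `x` has a countable local (neighbourhood) base. -/
def HasCountableLocalBase {X : Type*} [TopologicalSpace X] (x : X) : Prop :=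
  ∃ B : Set (Set X), B.Countable ∧ (∀ V ∈ B, IsOpen V ∧ x ∈ V) ∧
    ∀ U : Set X, IsOpen U → x ∈ U → ∃ V ∈ B, V ⊆ U

/-- `x` has a countable local π-base. -/
def HasCountableLocalPiBase {X : Type*} [TopologicalSpace X] (x : X) : Prop :=
  ∃ B : Set (Set X), B.Countable ∧ (∀ V ∈ B, IsOpen V ∧ V.Nonempty) ∧
    ∀ U : Set X, IsOpen U → x ∈ U → ∃ V ∈ B, V ⊆ U

/-- UC: every point has uncountable character. -/
def UC (X : Type*) [TopologicalSpace X] : Prop := ∀ x : X, ¬ HasCountableLocalBase x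

/-- π-UC: every point has uncountable π-character. -/
def PiUC (X : Type*) [TopologicalSpace X] : Prop := ∀ x : X, ¬ HasCountableLocalPiBase x

/-- Sequentially discrete: every convergent sequence is eventually constant. -/
def SD (X : Type*) [TopologicalSpace X] : Prop :=
  ∀ (x : ℕ → X) (y : X), Filter.Tendsto x Filter.atTop (nhds y) →
    ∃ m : ℕ, ∀ n ≥ m, x n = x m

/-- The Pixley–Roy hyperspace: nonempty finite subsets of `X`. -/
def PR (X : Type*) : Type _ := {F : Set X // F.Finite ∧ F.Nonempty}

/-- The basic sets `[F, U]` of the Pixley–Roy topology. -/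
def PRBasic {X : Type*} (F U : Set X) : Set (PR X) :=
  {G : PR X | F ⊆ G.1 ∧ G.1 ⊆ U}

instance PR.instTopologicalSpace {X : Type*} [TopologicalSpace X] :
    TopologicalSpace (PR X) :=
  TopologicalSpace.generateFrom
    {S | ∃ (F : PR X) (U : Set X), IsOpen U ∧ S = PRBasic F.1 U}

/-- P-space: countable intersections of open sets are open. -/
def PSpace (X : Type*) [TopologicalSpace X] : Prop :=
  ∀ U : ℕ → Set X, (∀ n, IsOpen (U n)) → IsOpen (⋂ n, U n)

/-- `Σ(Y, p, κ)`: points of `Y^κ` differing from the constant `p` on countably many coordinates. -/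
def SigmaProd (Y : Type*) (p : Y) (κ : Type*) : Set (κ → Y) :=
  {x | {α : κ | x α ≠ p}.Countable}

/-- `σ(Y, p, κ)`: points of `Y^κ` differing from the constant `p` on finitely many coordinates. -/
def SmallSigmaProd (Y : Type*) (p : Y) (κ : Type*) : Set (κ → Y) :=
  {x | {α : κ | x α ≠ p}.Finite}

theorem statement1 {κ : Type*} [Uncountable κ] (X : Type*) [TopologicalSpace X] [Nonempty X] :
    SHD (κ → X) ↔ ¬ SeqCompactSpace (κ → X) := by
  constructor
  · intro hshd hsc
    obtain ⟨x, -, hx⟩ := hshd (fun _ => Set.univ) (fun _ => isOpen_univ)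
      (fun _ => Set.univ_nonempty)
    obtain ⟨a, -, φ, hφ, ha⟩ := hsc.isSeqCompact_univ (fun n => Set.mem_univ (x n))
    exact hx φ hφ a ha
  · intro hsc U hUo hUne
    -- extract a sequence with no convergent subsequence
    have hns : ¬ IsSeqCompact (Set.univ : Set (κ → X)) := fun h => hsc ⟨h⟩
    unfold IsSeqCompact at hns
    push_neg at hns
    obtain ⟨f, -, hf⟩ := hns
    simp only [Set.mem_univ, true_and] at hf
    -- basic open sets inside each Uₙ
    choose p hp using hUne
    have key : ∀ n, ∃ (I : Finset κ) (u : κ → Set X),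
        (∀ a ∈ I, IsOpen (u a) ∧ p n a ∈ u a) ∧ (I : Set κ).pi u ⊆ U n := by
      intro n
      exact (isOpen_pi_iff.mp (hUo n)) (p n) (hp n)
    choose I u hu hsub using key
    set S : Set κ := ⋃ n, (I n : Set κ) with hS
    have hScount : S.Countable := Set.countable_iUnion fun n => (I n).countable_toSet
    have hcompl : Cardinal.mk ↥Sᶜ = Cardinal.mk κ :=
      Cardinal.mk_compl_of_infinite S (lt_of_le_of_lt hScount.le_aleph0 Cardinal.aleph0_lt_mk)
    obtain ⟨e⟩ : Nonempty (↥Sᶜ ≃ κ) := Cardinal.eq.mp hcompl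
    classical
    refine ⟨fun n α => if h : α ∈ S then p n α else f n (e ⟨α, h⟩), ?_, ?_⟩
    · intro n
      apply hsub n
      intro a ha
      have haS : a ∈ S := Set.mem_iUnion.mpr ⟨n, ha⟩
      simp only [haS, dif_pos]
      exact (hu n a ha).2
    · intro φ hφ y hy
      refine hf (fun β => y (e.symm β)) trivial φ hφ ?_
      rw [tendsto_pi_nhds]
      intro β
      have hb : ((e.symm β : κ)) ∉ S := (e.symm β).2
      have := (tendsto_pi_nhds.mp hy) (e.symm β : κ)
      simpa only [Function.comp, hb, dif_neg, not_false_iff, Subtype.coe_eta,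
        Equiv.apply_symm_apply] using this
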